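/- arXiv:1911.04807 — 2 statements merged into one kernel-verified Lean document; each statement's English description precedes it below -/
import Mathlib

section
/- Let (X, d, μ) be a metric measure space, let 1 < q < ∞, and let 𝓜 be a family of Borel measures on X with mod_q 𝓜 < ∞. Suppose ρ and φ are q-integrable Borel functions X → [0, ∞], each q-weakly admissible for 𝓜, and suppose ∫_X ρ^q dμ = mod_q 𝓜. Then mod_q 𝓜 ≤ ∫_X φ ρ^{q−1} dμ. -/
open MeasureTheory Metric Set ENNReal NNReal Filter Topology

noncomputable section

variable {X : Type*}

/-- A measure is Borel-regular: every set is contained in a Borel set of the same measure. -/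
def BorelRegular [MeasurableSpace X] (μ : Measure X) : Prop :=
  ∀ s : Set X, ∃ t : Set X, MeasurableSet t ∧ s ⊆ t ∧ μ t = μ s

/-- μ is doubling with constant `Cμ`: `0 < μ(2B) ≤ Cμ μ(B) < ∞` for all balls. -/
def IsDoublingWith [PseudoMetricSpace X] [MeasurableSpace X] (μ : Measure X) (Cμ : ℝ) : Prop :=
  ∀ (x : X) (r : ℝ), 0 < r →
    0 < μ (ball x (2 * r)) ∧ μ (ball x (2 * r)) ≤ ENNReal.ofReal Cμ * μ (ball x r) ∧
      μ (ball x r) < ⊤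

/-- `ρ` is an upper gradient of `u` on the set `V`: for every `L ≥ 0` and every
1-Lipschitz curve `γ : [0, L] → V`, `|u(γ L) − u(γ 0)| ≤ ∫₀^L ρ(γ t) dt`. -/
def IsUpperGradientOn [PseudoMetricSpace X] (u : X → ℝ) (ρ : X → ℝ≥0∞) (V : Set X) : Prop :=
  ∀ L : ℝ, 0 ≤ L → ∀ γ : ℝ → X, LipschitzOnWith 1 γ (Icc 0 L) → MapsTo γ (Icc 0 L) V →
    ENNReal.ofReal |u (γ L) - u (γ 0)| ≤ ∫⁻ t in Icc 0 L, ρ (γ t)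

/-- `X` supports a weak `p`-Poincaré inequality with constants `CP`, `lP`. -/
def WeakPoincare [PseudoMetricSpace X] [MeasurableSpace X] (μ : Measure X)
    (p CP lP : ℝ) : Prop :=
  ∀ u : X → ℝ, LocallyIntegrable u μ →
    ∀ ρ : X → ℝ≥0∞, Measurable ρ → IsUpperGradientOn u ρ univ →
    ∀ (x : X) (r : ℝ), 0 < r →
      ENNReal.ofReal (⨍ y in ball x r, |u y - ⨍ z in ball x r, u z ∂μ| ∂μ) ≤
        ENNReal.ofReal (CP * diam (ball x r)) *
          (⨍⁻ y in ball x (lP * r), ρ y ^ p ∂μ) ^ (1 / p)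

/-- `X` is Ahlfors `Q`-regular with constants `0 < a ≤ A`. -/
def AhlforsRegular [PseudoMetricSpace X] [MeasurableSpace X] (μ : Measure X)
    (Q a A : ℝ) : Prop :=
  0 < a ∧ a ≤ A ∧ ∀ (x : X) (r : ℝ), 0 < r → ENNReal.ofReal r < EMetric.diam (univ : Set X) →
    ENNReal.ofReal (a * r ^ Q) ≤ μ (ball x r) ∧ μ (ball x r) ≤ ENNReal.ofReal (A * r ^ Q)

/-- `ρ` is admissible for a family `M` of Borel measures: `∫ ρ dν ≥ 1` for all `ν ∈ M`. -/
def Admissible [MeasurableSpace X] (M : Set (Measure X)) (ρ : X → ℝ≥0∞) : Prop :=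
  Measurable ρ ∧ ∀ ν ∈ M, 1 ≤ ∫⁻ x, ρ x ∂ν

/-- The `q`-modulus of a family of Borel measures. -/
def modulus [MeasurableSpace X] (μ : Measure X) (q : ℝ) (M : Set (Measure X)) : ℝ≥0∞ :=
  ⨅ (ρ : X → ℝ≥0∞) (_ : Admissible M ρ), ∫⁻ x, ρ x ^ q ∂μ

/-- `ρ` is `q`-weakly admissible for `M`. -/
def WeaklyAdmissible [MeasurableSpace X] (μ : Measure X) (q : ℝ) (M : Set (Measure X))
    (ρ : X → ℝ≥0∞) : Prop :=
  ∃ N ⊆ M, modulus μ q N = 0 ∧ Admissible (M \ N) ρ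

/-- The family `Γ(E, F; G)` of measures `H¹` restricted to images of injective rectifiable
curves joining `E` and `F` in `G`. -/
def pathFamily [MetricSpace X] [MeasurableSpace X] [BorelSpace X] (E F G : Set X) :
    Set (Measure X) :=
  {ν | ∃ γ : ℝ → X, ContinuousOn γ (Icc 0 1) ∧ InjOn γ (Icc 0 1) ∧
    eVariationOn γ (Icc 0 1) ≠ ⊤ ∧ MapsTo γ (Icc 0 1) G ∧ γ 0 ∈ E ∧ γ 1 ∈ F ∧
    ν = (μH[1]).restrict (γ '' Icc 0 1)}

/-- `S` separates `E` from `F` in `G`: they lie in different connected components of `G \ S`. -/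
def SeparatesIn [TopologicalSpace X] (S E F G : Set X) : Prop :=
  ∃ x ∈ G \ S, ∃ y ∈ G \ S,
    E ⊆ connectedComponentIn (G \ S) x ∧ F ⊆ connectedComponentIn (G \ S) y ∧
    connectedComponentIn (G \ S) x ≠ connectedComponentIn (G \ S) y

/-- The family `Γ*(E, F; G)` of measures `H^d` restricted to `S ∩ G`, where `S` ranges over
compact subsets of the closure of `G`, of finite `H^d`-measure in `G`, separating `E` and `F`. -/
def surfaceFamilyH [MetricSpace X] [MeasurableSpace X] [BorelSpace X] (d : ℝ)
    (E F G : Set X) : Set (Measure X) :=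
  {ν | ∃ S : Set X, IsCompact S ∧ S ⊆ closure G ∧ μH[d] (S ∩ G) ≠ ⊤ ∧
    SeparatesIn S E F G ∧ ν = (μH[d]).restrict (S ∩ G)}

/-- The codimension-1 spherical Hausdorff measure associated to `μ`. -/
def codimOneHausdorff [PseudoMetricSpace X] [MeasurableSpace X] (μ : Measure X)
    (A : Set X) : ℝ≥0∞ :=
  ⨆ (δ : ℝ) (_ : 0 < δ),
    ⨅ (c : ℕ → X) (r : ℕ → ℝ) (_ : A ⊆ ⋃ i, ball (c i) (r i))
      (_ : ∀ i, 0 < r i ∧ r i ≤ δ), ∑' i, μ (ball (c i) (r i)) / ENNReal.ofReal (r i)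

/-- The integral `∫_A g d𝓗` of `g` over `A` against the codimension-1 spherical Hausdorff
measure, defined by the layer-cake formula. -/
def codimIntegral [PseudoMetricSpace X] [MeasurableSpace X] (μ : Measure X) (A : Set X)
    (g : X → ℝ≥0∞) : ℝ≥0∞ :=
  ∫⁻ s in Ioi (0 : ℝ), codimOneHausdorff μ (A ∩ {x | ENNReal.ofReal s < g x})

/-- The collection of "surfaces" of `Γ*(E, F; G)`: compact subsets of the closure of `G` of
finite codimension-1 measure in `G` separating `E` and `F` in `G`. -/
def surfaceSets [PseudoMetricSpace X] [MeasurableSpace X] (μ : Measure X) (E F G : Set X) :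
    Set (Set X) :=
  {S | IsCompact S ∧ S ⊆ closure G ∧ codimOneHausdorff μ (S ∩ G) ≠ ⊤ ∧ SeparatesIn S E F G}

/-- The `q`-modulus of a family `𝒮` of surfaces, each equipped with the codimension-1
spherical Hausdorff measure restricted to `S ∩ G`. -/
def surfModulus [PseudoMetricSpace X] [MeasurableSpace X] (μ : Measure X) (q : ℝ)
    (𝒮 : Set (Set X)) (G : Set X) : ℝ≥0∞ :=
  ⨅ (ρ : X → ℝ≥0∞)
    (_ : Measurable ρ ∧ ∀ S ∈ 𝒮, 1 ≤ codimIntegral μ (S ∩ G) ρ),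
    ∫⁻ x, ρ x ^ q ∂μ

/-- The upper Lebesgue integral of `f` over `s ⊆ ℝ`. -/
def upperIntegralOn (s : Set ℝ) (f : ℝ → ℝ≥0∞) : ℝ≥0∞ :=
  ⨅ (ψ : ℝ → ℝ≥0∞) (_ : Measurable ψ ∧ ∀ t, f t ≤ ψ t), ∫⁻ t in s, ψ t

/-- The restricted Hardy–Littlewood maximal function `M_R w`. -/
def restrMaximal [PseudoMetricSpace X] [MeasurableSpace X] (μ : Measure X) (R : ℝ)
    (w : X → ℝ≥0∞) (x : X) : ℝ≥0∞ :=
  ⨆ (r : ℝ) (_ : 0 < r ∧ r ≤ R), ⨍⁻ y in ball x r, w y ∂μ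

/-- `x` is a Lebesgue point of `v`. -/
def LebesguePoint [PseudoMetricSpace X] [MeasurableSpace X] (μ : Measure X) (v : X → ℝ)
    (x : X) : Prop :=
  Tendsto (fun r : ℝ => ⨍ y in ball x r, |v y - v x| ∂μ) (𝓝[>] 0) (𝓝 0)

/-- `u` is locally Lipschitz on `G`. -/
def IsLocallyLipschitzOn [PseudoMetricSpace X] (u : X → ℝ) (G : Set X) : Prop :=
  ∀ x ∈ G, ∃ (K : ℝ≥0) (t : Set X), t ∈ 𝓝[G] x ∧ LipschitzOnWith K u t

/-- `X` is a geodesic metric space. -/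
def IsGeodesicSpace (X : Type*) [MetricSpace X] : Prop :=
  ∀ x y : X, ∃ γ : ℝ → X, γ 0 = x ∧ γ (dist x y) = y ∧
    ∀ s ∈ Icc (0 : ℝ) (dist x y), ∀ t ∈ Icc (0 : ℝ) (dist x y), dist (γ s) (γ t) = |s - t|

/-- `G` is a domain (open connected set) with compact closure. -/
def IsDomainWithCompactClosure [TopologicalSpace X] (G : Set X) : Prop :=
  IsOpen G ∧ IsConnected G ∧ IsCompact (closure G)

/-- `E` is a nondegenerate continuum: compact, connected, with at least two points. -/
def IsNondegContinuum [TopologicalSpace X] (E : Set X) : Prop :=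
  IsCompact E ∧ IsConnected E ∧ E.Nontrivial

/-- The distance between two sets. -/
def setDist [PseudoMetricSpace X] (E F : Set X) : ℝ :=
  sInf ((fun p : X × X => dist p.1 p.2) '' (E ×ˢ F))

/-- The `s`-dimensional Hausdorff content. -/
def hContent {Y : Type*} [EMetricSpace Y] (s : ℝ) (E : Set Y) : ℝ≥0∞ :=
  ⨅ (U : ℕ → Set Y) (_ : E ⊆ ⋃ i, U i), ∑' i, EMetric.diam (U i) ^ s

end

section AuxLemmas

open MeasureTheory Set Filter Topology

private lemma rpow_mvt_bounds {q c d : ℝ} (hq : 1 ≤ q) (hc : 0 ≤ c) (hcd : c ≤ d) :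
    q * c ^ (q - 1) * (d - c) ≤ d ^ q - c ^ q ∧ d ^ q - c ^ q ≤ q * d ^ (q - 1) * (d - c) := by
  rcases eq_or_lt_of_le hcd with rfl | hlt
  · simp
  · have hd : 0 ≤ d := hc.trans hcd
    have hq0 : (0:ℝ) ≤ q - 1 := by linarith
    have hcont : ContinuousOn (fun x : ℝ => x ^ q) (Icc c d) :=
      (Real.continuous_rpow_const (by linarith)).continuousOn
    have hderiv : ∀ x ∈ Ioo c d, HasDerivAt (fun x : ℝ => x ^ q) (q * x ^ (q - 1)) x :=
      fun x _ => Real.hasDerivAt_rpow_const (Or.inr hq)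
    obtain ⟨ξ, hξ, hslope⟩ := exists_hasDerivAt_eq_slope _ _ hlt hcont hderiv
    have hdc : 0 < d - c := sub_pos.2 hlt
    have heq : d ^ q - c ^ q = q * ξ ^ (q - 1) * (d - c) := by
      rw [hslope]; field_simp
    have h1 : c ^ (q - 1) ≤ ξ ^ (q - 1) := Real.rpow_le_rpow hc hξ.1.le hq0
    have h2 : ξ ^ (q - 1) ≤ d ^ (q - 1) := Real.rpow_le_rpow (hc.trans hξ.1.le) hξ.2.le hq0
    constructor
    · rw [heq]
      exact mul_le_mul_of_nonneg_right
        (mul_le_mul_of_nonneg_left h1 (by linarith)) hdc.le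
    · rw [heq]
      exact mul_le_mul_of_nonneg_right
        (mul_le_mul_of_nonneg_left h2 (by linarith)) hdc.le

private lemma enn_point_ineq {q : ℝ} (hq : 1 < q) {s : ℝ} (hs : 0 < s) (hs1 : s < 1)
    {a b : ℝ≥0∞} (ha : a ≠ ⊤) (hb : b ≠ ⊤) :
    (ENNReal.ofReal (1 - s) * a + ENNReal.ofReal s * b) ^ q ≤
      ENNReal.ofReal ((1 - s) ^ q) * a ^ q +
        (ENNReal.ofReal q * ENNReal.ofReal s) *
          (b * (ENNReal.ofReal (1 - s) * a + ENNReal.ofReal s * b) ^ (q - 1)) := by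
  have hq0 : (0:ℝ) < q := by linarith
  have hq1 : (0:ℝ) ≤ q - 1 := by linarith
  have h1s : (0:ℝ) ≤ 1 - s := by linarith
  set A := a.toReal with hA
  set B := b.toReal with hB
  have hA0 : 0 ≤ A := ENNReal.toReal_nonneg
  have hB0 : 0 ≤ B := ENNReal.toReal_nonneg
  have haA : a = ENNReal.ofReal A := (ENNReal.ofReal_toReal ha).symm
  have hbB : b = ENNReal.ofReal B := (ENNReal.ofReal_toReal hb).symm
  have hcombo : ENNReal.ofReal (1 - s) * a + ENNReal.ofReal s * b
      = ENNReal.ofReal ((1 - s) * A + s * B) := by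
    rw [haA, hbB, ← ENNReal.ofReal_mul h1s, ← ENNReal.ofReal_mul hs.le,
      ← ENNReal.ofReal_add (by positivity) (by positivity)]
  have hkey := (rpow_mvt_bounds hq.le (c := (1 - s) * A) (d := (1 - s) * A + s * B)
    (by positivity) (by nlinarith)).2
  have hdc : (1 - s) * A + s * B - (1 - s) * A = s * B := by ring
  rw [hdc] at hkey
  have hcq : ((1 - s) * A) ^ q = (1 - s) ^ q * A ^ q := Real.mul_rpow h1s hA0
  calc (ENNReal.ofReal (1 - s) * a + ENNReal.ofReal s * b) ^ q
      = ENNReal.ofReal (((1 - s) * A + s * B) ^ q) := by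
        rw [hcombo, ENNReal.ofReal_rpow_of_nonneg (by positivity) hq0.le]
    _ ≤ ENNReal.ofReal ((1 - s) ^ q * A ^ q
          + q * (((1 - s) * A + s * B) ^ (q - 1) * (s * B))) := by
        apply ENNReal.ofReal_le_ofReal
        rw [← hcq]; nlinarith [hkey]
    _ = ENNReal.ofReal ((1 - s) ^ q) * a ^ q +
          (ENNReal.ofReal q * ENNReal.ofReal s) *
            (b * (ENNReal.ofReal (1 - s) * a + ENNReal.ofReal s * b) ^ (q - 1)) := by
        rw [ENNReal.ofReal_add (by positivity) (by positivity)]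
        congr 1
        · rw [ENNReal.ofReal_mul (by positivity), haA,
            ENNReal.ofReal_rpow_of_nonneg hA0 hq0.le]
        · rw [hcombo, hbB, ENNReal.ofReal_rpow_of_nonneg (by positivity) hq1,
            ← ENNReal.ofReal_mul hB0, ← ENNReal.ofReal_mul hq0.le,
            ← ENNReal.ofReal_mul (by positivity : (0:ℝ) ≤ q * s)]
          congr 1; ring

end AuxLemmas

private lemma modulus_le_of_adm {X : Type*} [MeasurableSpace X] (μ : Measure X) {q : ℝ}
    (hq : 1 ≤ q) {M N₁ N₂ : Set (Measure X)}
    (h₁ : modulus μ q N₁ = 0) (h₂ : modulus μ q N₂ = 0)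
    {g : X → ℝ≥0∞} (hg : Admissible (M \ (N₁ ∪ N₂)) g) :
    modulus μ q M ≤ ∫⁻ x, g x ^ q ∂μ := by
  by_cases hB : (∫⁻ x, g x ^ q ∂μ) = ⊤
  · simp [hB]
  have hq0 : (0:ℝ) < q := lt_of_lt_of_le one_pos hq
  have key : (modulus μ q M) ^ (1/q) ≤ (∫⁻ x, g x ^ q ∂μ) ^ (1/q) := by
    apply ENNReal.le_of_forall_pos_le_add
    intro ε hε _
    have hε2 : (0:ℝ≥0∞) < (ε : ℝ≥0∞) / 2 := ENNReal.div_pos (by exact_mod_cast hε.ne') (by norm_num)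
    have hδ : (0:ℝ≥0∞) < ((ε : ℝ≥0∞) / 2) ^ q :=
      ENNReal.rpow_pos hε2 (by simp [ENNReal.div_eq_top])
    have get : ∀ N : Set (Measure X), modulus μ q N = 0 →
        ∃ h : X → ℝ≥0∞, Admissible N h ∧ (∫⁻ x, h x ^ q ∂μ) < ((ε : ℝ≥0∞) / 2) ^ q := by
      intro N hN
      have : modulus μ q N < ((ε : ℝ≥0∞) / 2) ^ q := hN ▸ hδ
      unfold modulus at this
      simp only [iInf_lt_iff] at this
      obtain ⟨h, hadm, hlt⟩ := this
      exact ⟨h, hadm, hlt⟩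
    obtain ⟨h₁', hadm₁, hlt₁⟩ := get N₁ h₁
    obtain ⟨h₂', hadm₂, hlt₂⟩ := get N₂ h₂
    set G : X → ℝ≥0∞ := fun x => g x + h₁' x + h₂' x with hG
    have hGm : Measurable G := (hg.1.add hadm₁.1).add hadm₂.1
    have hGadm : Admissible M G := by
      refine ⟨hGm, fun ν hν => ?_⟩
      by_cases hν₁ : ν ∈ N₁
      · refine le_trans (hadm₁.2 ν hν₁) (lintegral_mono fun x => ?_)
        calc h₁' x ≤ g x + h₁' x := le_add_self
          _ ≤ g x + h₁' x + h₂' x := le_self_add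
      by_cases hν₂ : ν ∈ N₂
      · exact le_trans (hadm₂.2 ν hν₂) (lintegral_mono fun x => le_add_self)
      · refine le_trans (hg.2 ν ⟨hν, fun hmem => ?_⟩) (lintegral_mono fun x => ?_)
        · rcases hmem with h | h; exacts [hν₁ h, hν₂ h]
        · calc g x ≤ g x + h₁' x := le_self_add
            _ ≤ g x + h₁' x + h₂' x := le_self_add
    have hmodG : modulus μ q M ≤ ∫⁻ x, G x ^ q ∂μ := by
      unfold modulus
      exact iInf₂_le G hGadm
    have hrpow : ∀ {u : X → ℝ≥0∞}, (∫⁻ x, u x ^ q ∂μ) < ((ε : ℝ≥0∞) / 2) ^ q →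
        (∫⁻ x, u x ^ q ∂μ) ^ (1/q) ≤ (ε : ℝ≥0∞) / 2 := by
      intro u hu
      calc (∫⁻ x, u x ^ q ∂μ) ^ (1/q) ≤ (((ε : ℝ≥0∞) / 2) ^ q) ^ (1/q) :=
            ENNReal.rpow_le_rpow hu.le (by positivity)
        _ = (ε : ℝ≥0∞) / 2 := by
            rw [← ENNReal.rpow_mul, mul_one_div_cancel hq0.ne', ENNReal.rpow_one]
    have mink : (∫⁻ x, G x ^ q ∂μ) ^ (1/q) ≤
        (∫⁻ x, g x ^ q ∂μ) ^ (1/q) + (ε : ℝ≥0∞) / 2 + (ε : ℝ≥0∞) / 2 := by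
      have m1 : (∫⁻ x, G x ^ q ∂μ) ^ (1/q) ≤
          (∫⁻ x, (g x + h₁' x) ^ q ∂μ) ^ (1/q) + (∫⁻ x, h₂' x ^ q ∂μ) ^ (1/q) := by
        have := ENNReal.lintegral_Lp_add_le (f := fun x => g x + h₁' x) (g := h₂')
          (hg.1.add hadm₁.1).aemeasurable hadm₂.1.aemeasurable hq (μ := μ)
        simpa [hG, Pi.add_apply] using this
      have m2 : (∫⁻ x, (g x + h₁' x) ^ q ∂μ) ^ (1/q) ≤
          (∫⁻ x, g x ^ q ∂μ) ^ (1/q) + (∫⁻ x, h₁' x ^ q ∂μ) ^ (1/q) := by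
        have := ENNReal.lintegral_Lp_add_le (f := g) (g := h₁')
          hg.1.aemeasurable hadm₁.1.aemeasurable hq (μ := μ)
        simpa [Pi.add_apply] using this
      calc (∫⁻ x, G x ^ q ∂μ) ^ (1/q)
          ≤ (∫⁻ x, (g x + h₁' x) ^ q ∂μ) ^ (1/q) + (∫⁻ x, h₂' x ^ q ∂μ) ^ (1/q) := m1
        _ ≤ ((∫⁻ x, g x ^ q ∂μ) ^ (1/q) + (∫⁻ x, h₁' x ^ q ∂μ) ^ (1/q))
              + (∫⁻ x, h₂' x ^ q ∂μ) ^ (1/q) := add_le_add_left m2 _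
        _ ≤ ((∫⁻ x, g x ^ q ∂μ) ^ (1/q) + (ε : ℝ≥0∞) / 2) + (ε : ℝ≥0∞) / 2 :=
            add_le_add (add_le_add_right (hrpow hlt₁) _) (hrpow hlt₂)
    calc (modulus μ q M) ^ (1/q) ≤ (∫⁻ x, G x ^ q ∂μ) ^ (1/q) :=
          ENNReal.rpow_le_rpow hmodG (by positivity)
      _ ≤ (∫⁻ x, g x ^ q ∂μ) ^ (1/q) + (ε : ℝ≥0∞) / 2 + (ε : ℝ≥0∞) / 2 := mink
      _ = (∫⁻ x, g x ^ q ∂μ) ^ (1/q) + (ε : ℝ≥0∞) := by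
          rw [add_assoc, ENNReal.add_halves]
  have := ENNReal.rpow_le_rpow key hq0.le
  rwa [← ENNReal.rpow_mul, ← ENNReal.rpow_mul, one_div_mul_cancel hq0.ne',
    ENNReal.rpow_one, ENNReal.rpow_one] at this

/-- Variational inequality for the modulus minimizer (Lemma 5.2 of Lohvansuu–Rajala). -/
theorem modulus_minimizer_variation {X : Type*} [MetricSpace X] [MeasurableSpace X]
    (μ : Measure X) (hBR : BorelRegular μ) (q : ℝ) (hq : 1 < q)
    (M : Set (Measure X)) (hM : modulus μ q M ≠ ⊤)
    (ρ φ : X → ℝ≥0∞) (hρm : Measurable ρ) (hφm : Measurable φ)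
    (hρint : (∫⁻ x, ρ x ^ q ∂μ) ≠ ⊤) (hφint : (∫⁻ x, φ x ^ q ∂μ) ≠ ⊤)
    (hρ : WeaklyAdmissible μ q M ρ) (hφ : WeaklyAdmissible μ q M φ)
    (hmin : (∫⁻ x, ρ x ^ q ∂μ) = modulus μ q M) :
    modulus μ q M ≤ ∫⁻ x, φ x * ρ x ^ (q - 1) ∂μ := by
  obtain ⟨N₁, hN₁M, hN₁0, hρadm⟩ := hρ
  obtain ⟨N₂, hN₂M, hN₂0, hφadm⟩ := hφ
  have hq0 : (0:ℝ) < q := by linarith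
  have hq1 : (0:ℝ) ≤ q - 1 := by linarith
  set I := ∫⁻ x, φ x * ρ x ^ (q - 1) ∂μ with hI
  set A := modulus μ q M with hA
  -- the sequence sₙ = 1/(n+2)
  set s : ℕ → ℝ := fun n => 1 / ((n : ℝ) + 2) with hs
  have hs0 : ∀ n, 0 < s n := fun n => by positivity
  have hs1 : ∀ n, s n < 1 := by
    intro n
    rw [hs, div_lt_one (by positivity)]
    have : (0:ℝ) ≤ (n : ℝ) := Nat.cast_nonneg n
    linarith
  have hstend : Tendsto s atTop (𝓝 0) := by
    have h := (tendsto_one_div_add_atTop_nhds_zero_nat (𝕜 := ℝ)).comp (tendsto_add_atTop_nat 1)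
    have : (fun n : ℕ => 1 / ((↑(n + 1) : ℝ) + 1)) = s := by
      funext n; rw [hs]; push_cast; ring_nf
    rwa [Function.comp_def, this] at h
  -- the convex combinations
  set c : ℕ → X → ℝ≥0∞ :=
    fun n x => ENNReal.ofReal (1 - s n) * ρ x + ENNReal.ofReal (s n) * φ x with hc
  have hcm : ∀ n, Measurable (c n) := fun n => (hρm.const_mul _).add (hφm.const_mul _)
  -- admissibility of the combinations
  have hadm : ∀ n, Admissible (M \ (N₁ ∪ N₂)) (c n) := by
    intro n
    refine ⟨hcm n, fun ν hν => ?_⟩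
    have h1 : 1 ≤ ∫⁻ x, ρ x ∂ν := hρadm.2 ν ⟨hν.1, fun h => hν.2 (Or.inl h)⟩
    have h2 : 1 ≤ ∫⁻ x, φ x ∂ν := hφadm.2 ν ⟨hν.1, fun h => hν.2 (Or.inr h)⟩
    have hInt : ∫⁻ x, c n x ∂ν =
        ENNReal.ofReal (1 - s n) * ∫⁻ x, ρ x ∂ν + ENNReal.ofReal (s n) * ∫⁻ x, φ x ∂ν := by
      rw [hc]
      rw [lintegral_add_left (hρm.const_mul _), lintegral_const_mul _ hρm,
        lintegral_const_mul _ hφm]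
    rw [hInt]
    calc (1:ℝ≥0∞) = ENNReal.ofReal (1 - s n) + ENNReal.ofReal (s n) := by
          rw [← ENNReal.ofReal_add (by linarith [hs1 n]) (hs0 n).le]
          norm_num
      _ ≤ _ := by
          refine add_le_add ?_ ?_
          · calc ENNReal.ofReal (1 - s n) = ENNReal.ofReal (1 - s n) * 1 := (mul_one _).symm
              _ ≤ _ := mul_le_mul_right h1 _
          · calc ENNReal.ofReal (s n) = ENNReal.ofReal (s n) * 1 := (mul_one _).symm
              _ ≤ _ := mul_le_mul_right h2 _
  have hmod_le : ∀ n, A ≤ ∫⁻ x, c n x ^ q ∂μ :=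
    fun n => modulus_le_of_adm μ hq.le hN₁0 hN₂0 (hadm n)
  set J : ℕ → ℝ≥0∞ := fun n => ∫⁻ x, φ x * c n x ^ (q - 1) ∂μ with hJ
  -- a.e. finiteness
  have hfin : ∀ {u : X → ℝ≥0∞}, Measurable u → (∫⁻ x, u x ^ q ∂μ) ≠ ⊤ →
      ∀ᵐ x ∂μ, u x ≠ ⊤ := by
    intro u hum huint
    have hmeas : Measurable fun x => u x ^ q :=
      ENNReal.continuous_rpow_const.measurable.comp hum
    filter_upwards [ae_lt_top hmeas huint] with x hx
    intro hx'
    rw [hx', ENNReal.top_rpow_of_pos hq0] at hx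
    exact absurd hx (lt_irrefl _)
  have hρae : ∀ᵐ x ∂μ, ρ x ≠ ⊤ := hfin hρm hρint
  have hφae : ∀ᵐ x ∂μ, φ x ≠ ⊤ := hfin hφm hφint
  -- integral estimate
  have hstep : ∀ n, (∫⁻ x, c n x ^ q ∂μ) ≤
      ENNReal.ofReal ((1 - s n) ^ q) * (∫⁻ x, ρ x ^ q ∂μ) +
        (ENNReal.ofReal q * ENNReal.ofReal (s n)) * J n := by
    intro n
    have hmono : (∫⁻ x, c n x ^ q ∂μ) ≤
        ∫⁻ x, (ENNReal.ofReal ((1 - s n) ^ q) * ρ x ^ q +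
          (ENNReal.ofReal q * ENNReal.ofReal (s n)) * (φ x * c n x ^ (q - 1))) ∂μ := by
      refine lintegral_mono_ae ?_
      filter_upwards [hρae, hφae] with x hx hy
      exact enn_point_ineq hq (hs0 n) (hs1 n) hx hy
    refine hmono.trans (le_of_eq ?_)
    have m1 : Measurable fun x : X => ρ x ^ q :=
      ENNReal.continuous_rpow_const.measurable.comp hρm
    have m2 : Measurable fun x : X => φ x * c n x ^ (q - 1) :=
      hφm.mul (ENNReal.continuous_rpow_const.measurable.comp (hcm n))
    rw [lintegral_add_left (m1.const_mul _), lintegral_const_mul _ m1,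
      lintegral_const_mul _ m2]
  -- the key chain of inequalities for each n
  have hchain : ∀ n, ENNReal.ofReal (q * (1 - s n) ^ (q - 1)) * A ≤ ENNReal.ofReal q * J n := by
    intro n
    have h3 : A ≤ ENNReal.ofReal ((1 - s n) ^ q) * A +
        (ENNReal.ofReal q * ENNReal.ofReal (s n)) * J n := by
      calc A ≤ ∫⁻ x, c n x ^ q ∂μ := hmod_le n
        _ ≤ ENNReal.ofReal ((1 - s n) ^ q) * (∫⁻ x, ρ x ^ q ∂μ) +
              (ENNReal.ofReal q * ENNReal.ofReal (s n)) * J n := hstep n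
        _ = _ := by rw [hmin]
    have h4 : (1 - ENNReal.ofReal ((1 - s n) ^ q)) * A ≤
        (ENNReal.ofReal q * ENNReal.ofReal (s n)) * J n := by
      rw [ENNReal.sub_mul (fun _ _ => hM), one_mul]
      exact tsub_le_iff_left.mpr (by rw [add_comm] at h3 ⊢; exact h3)
    have h5 : ENNReal.ofReal (q * (1 - s n) ^ (q - 1) * s n) ≤
        1 - ENNReal.ofReal ((1 - s n) ^ q) := by
      rw [← ENNReal.ofReal_one, ← ENNReal.ofReal_sub _ (Real.rpow_nonneg (by linarith [hs1 n]) _)]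
      apply ENNReal.ofReal_le_ofReal
      have hmvt := (rpow_mvt_bounds hq.le (c := 1 - s n) (d := 1)
        (by linarith [hs1 n]) (by linarith [hs0 n])).1
      have he : (1:ℝ) - (1 - s n) = s n := by ring
      rw [Real.one_rpow, he] at hmvt
      exact hmvt
    have h6 : ENNReal.ofReal (s n) * (ENNReal.ofReal (q * (1 - s n) ^ (q - 1)) * A) ≤
        ENNReal.ofReal (s n) * (ENNReal.ofReal q * J n) := by
      calc ENNReal.ofReal (s n) * (ENNReal.ofReal (q * (1 - s n) ^ (q - 1)) * A)
          = ENNReal.ofReal (q * (1 - s n) ^ (q - 1) * s n) * A := by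
            rw [ENNReal.ofReal_mul (p := q * (1 - s n) ^ (q - 1))
              (mul_nonneg hq0.le (Real.rpow_nonneg (by linarith [hs1 n]) _))]
            ring
        _ ≤ (1 - ENNReal.ofReal ((1 - s n) ^ q)) * A := mul_le_mul_left h5 A
        _ ≤ (ENNReal.ofReal q * ENNReal.ofReal (s n)) * J n := h4
        _ = ENNReal.ofReal (s n) * (ENNReal.ofReal q * J n) := by ring
    exact (ENNReal.mul_le_mul_iff_right (ENNReal.ofReal_pos.mpr (hs0 n)).ne'
      ENNReal.ofReal_ne_top).mp h6
  -- integrability of the dominating function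
  have hbound_int : (∫⁻ x, (ρ x + φ x) ^ q ∂μ) ≠ ⊤ := by
    have hpt : ∀ x, (ρ x + φ x) ^ q ≤ (2:ℝ≥0∞) ^ q * (ρ x ^ q + φ x ^ q) := by
      intro x
      rcases le_total (ρ x) (φ x) with h | h
      · calc (ρ x + φ x) ^ q ≤ (2 * φ x) ^ q :=
            ENNReal.rpow_le_rpow (by rw [two_mul]; exact add_le_add_left h _) hq0.le
          _ = (2:ℝ≥0∞) ^ q * φ x ^ q := ENNReal.mul_rpow_of_nonneg _ _ hq0.le
          _ ≤ _ := mul_le_mul_right le_add_self _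
      · calc (ρ x + φ x) ^ q ≤ (2 * ρ x) ^ q :=
            ENNReal.rpow_le_rpow (by rw [two_mul]; exact add_le_add_right h _) hq0.le
          _ = (2:ℝ≥0∞) ^ q * ρ x ^ q := ENNReal.mul_rpow_of_nonneg _ _ hq0.le
          _ ≤ _ := mul_le_mul_right le_self_add _
    have : (∫⁻ x, (ρ x + φ x) ^ q ∂μ) ≤
        (2:ℝ≥0∞) ^ q * ((∫⁻ x, ρ x ^ q ∂μ) + ∫⁻ x, φ x ^ q ∂μ) := by
      calc (∫⁻ x, (ρ x + φ x) ^ q ∂μ) ≤ ∫⁻ x, (2:ℝ≥0∞) ^ q * (ρ x ^ q + φ x ^ q) ∂μ :=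
            lintegral_mono hpt
        _ = _ := by
            have m1 : Measurable fun x : X => ρ x ^ q :=
              ENNReal.continuous_rpow_const.measurable.comp hρm
            have m2 : Measurable fun x : X => φ x ^ q :=
              ENNReal.continuous_rpow_const.measurable.comp hφm
            rw [lintegral_const_mul _ (f := fun x => ρ x ^ q + φ x ^ q) (m1.add m2), lintegral_add_left m1]
    refine ne_top_of_le_ne_top ?_ this
    exact ENNReal.mul_ne_top (ENNReal.rpow_ne_top_of_nonneg hq0.le (by norm_num))
      (ENNReal.add_ne_top.mpr ⟨hρint, hφint⟩)
  -- dominated convergence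
  have hJtend : Tendsto J atTop (𝓝 I) := by
    refine tendsto_lintegral_of_dominated_convergence (fun x => (ρ x + φ x) ^ q)
      (fun n => hφm.mul (ENNReal.continuous_rpow_const.measurable.comp (hcm n)))
      (fun n => ?_) hbound_int ?_
    · refine Filter.Eventually.of_forall fun x => ?_
      have hc_le : c n x ≤ ρ x + φ x := by
        rw [hc]
        exact add_le_add (mul_le_of_le_one_left' (ENNReal.ofReal_le_one.mpr (by linarith [hs0 n])))
          (mul_le_of_le_one_left' (ENNReal.ofReal_le_one.mpr (hs1 n).le))
      calc φ x * c n x ^ (q - 1) ≤ (ρ x + φ x) * (ρ x + φ x) ^ (q - 1) :=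
            mul_le_mul' le_add_self (ENNReal.rpow_le_rpow hc_le hq1)
        _ = (ρ x + φ x) ^ q := by
            have h := (ENNReal.rpow_add_of_nonneg (x := ρ x + φ x) 1 (q - 1)
              zero_le_one hq1).symm
            rw [ENNReal.rpow_one] at h
            rw [h]
            norm_num
    · filter_upwards [hρae, hφae] with x hx hy
      have t1 : Tendsto (fun n => ENNReal.ofReal (1 - s n) * ρ x) atTop (𝓝 (ρ x)) := by
        have : Tendsto (fun n => ENNReal.ofReal (1 - s n)) atTop (𝓝 1) := by
          have hr : Tendsto (fun n => 1 - s n) atTop (𝓝 (1:ℝ)) := by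
            simpa using tendsto_const_nhds.sub hstend
          simpa [Function.comp_def] using (ENNReal.continuous_ofReal.tendsto 1).comp hr
        simpa using ENNReal.Tendsto.mul_const this (Or.inl one_ne_zero)
      have t2 : Tendsto (fun n => ENNReal.ofReal (s n) * φ x) atTop (𝓝 0) := by
        have : Tendsto (fun n => ENNReal.ofReal (s n)) atTop (𝓝 0) := by
          simpa [Function.comp_def] using (ENNReal.continuous_ofReal.tendsto 0).comp hstend
        simpa using ENNReal.Tendsto.mul_const this (Or.inr hy)
      have hcx : Tendsto (fun n => c n x) atTop (𝓝 (ρ x)) := by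
        simpa using t1.add t2
      have hcq : Tendsto (fun n => c n x ^ (q - 1)) atTop (𝓝 (ρ x ^ (q - 1))) :=
        (ENNReal.continuous_rpow_const.tendsto _).comp hcx
      exact ENNReal.Tendsto.const_mul hcq (Or.inr hy)
  -- pass to the limit
  have hL : Tendsto (fun n => ENNReal.ofReal (q * (1 - s n) ^ (q - 1)) * A) atTop
      (𝓝 (ENNReal.ofReal q * A)) := by
    have hreal : Tendsto (fun n => q * (1 - s n) ^ (q - 1)) atTop (𝓝 q) := by
      have hb : Tendsto (fun n => (1:ℝ) - s n) atTop (𝓝 1) := by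
        simpa using tendsto_const_nhds.sub hstend
      have hp : Tendsto (fun n => ((1:ℝ) - s n) ^ (q - 1)) atTop (𝓝 1) := by
        have hcont := (Real.continuousAt_rpow_const 1 (q - 1) (Or.inl one_ne_zero)).tendsto
        have := hcont.comp hb
        simpa [Real.one_rpow, Function.comp_def] using this
      simpa using tendsto_const_nhds.mul hp
    have : Tendsto (fun n => ENNReal.ofReal (q * (1 - s n) ^ (q - 1))) atTop
        (𝓝 (ENNReal.ofReal q)) := (ENNReal.continuous_ofReal.tendsto q).comp hreal
    exact ENNReal.Tendsto.mul_const this (Or.inl (ENNReal.ofReal_pos.mpr hq0).ne')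
  have hR : Tendsto (fun n => ENNReal.ofReal q * J n) atTop (𝓝 (ENNReal.ofReal q * I)) :=
    ENNReal.Tendsto.const_mul hJtend (Or.inr ENNReal.ofReal_ne_top)
  have hfinal : ENNReal.ofReal q * A ≤ ENNReal.ofReal q * I :=
    le_of_tendsto_of_tendsto' hL hR hchain
  exact (ENNReal.mul_le_mul_iff_right (ENNReal.ofReal_pos.mpr hq0).ne'
    ENNReal.ofReal_ne_top).mp hfinal
end

section
/- Let ε ∈ (0, 1), let c > 0, and let K ⊆ [1/4, 3/4] be a compact set such that 𝓗^{1−ε}_∞(K ∩ B(x, r)) ≥ c r^{1−ε} for all x ∈ K and 0 < r < 1. Then the set A = [1/4, 3/4] × K × {0} ⊂ ℝ³ satisfies 𝓗^{2−ε}_∞(A ∩ B(x, r)) ≥ C r^{2−ε} for all x ∈ A and 0 < r ≤ diam([0,1]³), where C > 0 depends only on c and ε. -/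
open MeasureTheory Metric Set ENNReal NNReal Filter Topology

/-- The auxiliary embedding of a line into the plane `{p 2 = 0}` of `ℝ³`. -/
noncomputable def LRemb (t y : ℝ) : EuclideanSpace ℝ (Fin 3) :=
  (WithLp.equiv 2 (Fin 3 → ℝ)).symm ![t, y, 0]

lemma LRemb_apply0 (t y : ℝ) : LRemb t y 0 = t := rfl
lemma LRemb_apply1 (t y : ℝ) : LRemb t y 1 = y := rfl
lemma LRemb_apply2 (t y : ℝ) : LRemb t y 2 = 0 := rfl

lemma LRemb_dist (t y y' : ℝ) : dist (LRemb t y) (LRemb t y') = dist y y' := by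
  rw [EuclideanSpace.dist_eq, Fin.sum_univ_three]
  simp [LRemb_apply0, LRemb_apply1, LRemb_apply2, Real.dist_eq, Real.sqrt_sq_eq_abs]

lemma LRemb_edist (t y y' : ℝ) : edist (LRemb t y) (LRemb t y') = edist y y' := by
  rw [edist_dist, edist_dist, LRemb_dist]

lemma LR_coord_lip (p q : EuclideanSpace ℝ (Fin 3)) (i : Fin 3) :
    dist (p i) (q i) ≤ dist p q := by
  rw [EuclideanSpace.dist_eq]
  have h1 : dist (p i) (q i) = Real.sqrt (dist (p i) (q i) ^ 2) := by
    rw [Real.sqrt_sq dist_nonneg]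
  rw [h1]
  exact Real.sqrt_le_sqrt (Finset.single_le_sum (f := fun j => dist (p j) (q j) ^ 2)
    (fun j _ => sq_nonneg _) (Finset.mem_univ i))

lemma LRemb_dist_sq (t y : ℝ) (x : EuclideanSpace ℝ (Fin 3)) (hx2 : x 2 = 0) :
    dist (LRemb t y) x ^ 2 = dist t (x 0) ^ 2 + dist y (x 1) ^ 2 := by
  rw [EuclideanSpace.dist_eq, Fin.sum_univ_three, Real.sq_sqrt]
  · simp [LRemb_apply0, LRemb_apply1, LRemb_apply2, hx2]
  · positivity

lemma hContent_le_of_cover {Y : Type*} [EMetricSpace Y] (s : ℝ) (E : Set Y) (U : ℕ → Set Y)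
    (hU : E ⊆ ⋃ i, U i) : hContent s E ≤ ∑' i, EMetric.diam (U i) ^ s :=
  iInf₂_le U hU

lemma le_hContent_of {Y : Type*} [EMetricSpace Y] (s : ℝ) (E : Set Y) (a : ℝ≥0∞)
    (h : ∀ U : ℕ → Set Y, E ⊆ ⋃ i, U i → a ≤ ∑' i, EMetric.diam (U i) ^ s) :
    a ≤ hContent s E :=
  le_iInf₂ h

/-- Hausdorff content estimate for the product of an interval and a Cantor-type set
(Section 6 of Lohvansuu–Rajala). -/
theorem product_hausdorff_content_bound :
    ∀ ε c : ℝ, 0 < ε → ε < 1 → 0 < c →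
    ∃ C : ℝ, 0 < C ∧ ∀ K : Set ℝ, IsCompact K → K ⊆ Icc (1 / 4 : ℝ) (3 / 4) →
      (∀ x ∈ K, ∀ r : ℝ, 0 < r → r < 1 →
        ENNReal.ofReal (c * r ^ (1 - ε)) ≤ hContent (1 - ε) (K ∩ ball x r)) →
      ∀ A : Set (EuclideanSpace ℝ (Fin 3)),
        A = {p | p 0 ∈ Icc (1 / 4 : ℝ) (3 / 4) ∧ p 1 ∈ K ∧ p 2 = 0} →
        ∀ x ∈ A, ∀ r : ℝ, 0 < r →
          r ≤ diam {p : EuclideanSpace ℝ (Fin 3) | ∀ i, p i ∈ Icc (0 : ℝ) 1} →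
          ENNReal.ofReal (C * r ^ (2 - ε)) ≤ hContent (2 - ε) (A ∩ ball x r) := by
  classical
  intro ε c hε hε1 hc
  refine ⟨c / 64, by positivity, ?_⟩
  intro K _hKc _hKs hK A hA x hxA r hr hrle
  -- the cube has diameter at most 2, hence r ≤ 2
  have hcube : diam {p : EuclideanSpace ℝ (Fin 3) | ∀ i, p i ∈ Icc (0 : ℝ) 1} ≤ 2 := by
    apply diam_le_of_forall_dist_le (by norm_num)
    intro p hp q hq
    have h : ∀ i : Fin 3, dist (p i) (q i) ^ 2 ≤ 1 := by
      intro i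
      have h1 := (hp i).1; have h2 := (hp i).2
      have h3 := (hq i).1; have h4 := (hq i).2
      rw [Real.dist_eq]
      nlinarith [abs_nonneg (p i - q i), sq_abs (p i - q i)]
    rw [EuclideanSpace.dist_eq, Fin.sum_univ_three]
    have hsum : dist (p 0) (q 0) ^ 2 + dist (p 1) (q 1) ^ 2 + dist (p 2) (q 2) ^ 2 ≤ 4 := by
      have := h 0; have := h 1; have := h 2; linarith
    calc √(dist (p 0) (q 0) ^ 2 + dist (p 1) (q 1) ^ 2 + dist (p 2) (q 2) ^ 2) ≤ √4 :=
          Real.sqrt_le_sqrt hsum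
      _ = 2 := by rw [show (4:ℝ) = 2^2 by norm_num, Real.sqrt_sq (by norm_num)]
  have hr2 : r ≤ 2 := hrle.trans hcube
  -- coordinates of the center x
  rw [hA] at hxA
  obtain ⟨hx0, hx1, hx2⟩ := hxA
  -- the base interval I = Icc a (a+m)
  set m : ℝ := min (r / 4) (1 / 4) with hm_def
  have hm0 : 0 < m := by positivity
  have hmr : m ≤ r / 4 := min_le_left _ _
  have hm4 : m ≤ 1 / 4 := min_le_right _ _
  have hm8 : r / 8 ≤ m := by
    rcases le_total (r / 4) (1 / 4) with h | h
    · rw [hm_def, min_eq_left h]; linarith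
    · rw [hm_def, min_eq_right h]; linarith
  obtain ⟨a, haI, hadist⟩ : ∃ a : ℝ, Icc a (a + m) ⊆ Icc (1 / 4 : ℝ) (3 / 4) ∧
      ∀ t ∈ Icc a (a + m), |t - x 0| ≤ r / 4 := by
    rcases le_or_gt (x 0) (1 / 2) with h | h
    · refine ⟨x 0, fun t ht => ⟨le_trans hx0.1 ht.1, le_trans ht.2 (by linarith)⟩,
        fun t ht => ?_⟩
      rw [abs_le]; exact ⟨by linarith [ht.1], by linarith [ht.2]⟩
    · refine ⟨x 0 - m, fun t ht => ⟨by linarith [ht.1], le_trans ht.2 (by linarith [hx0.2])⟩,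
        fun t ht => ?_⟩
      rw [abs_le]; constructor
      · have := ht.1; linarith
      · have := ht.2; linarith
  -- now bound the content from below via an arbitrary cover
  refine le_hContent_of _ _ _ (fun U hU => ?_)
  set d : ℕ → ℝ≥0∞ := fun i => EMetric.diam (U i) with hd_def
  by_cases hfin : ∀ i, d i ≠ ⊤
  swap
  · push_neg at hfin
    obtain ⟨i, hi⟩ := hfin
    have htop : d i ^ (2 - ε) = ⊤ := by
      rw [hi]; exact ENNReal.top_rpow_of_pos (by linarith)
    exact le_trans le_top (htop ▸ ENNReal.le_tsum i)
  -- centers and shadow intervals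
  set q : ℕ → ℝ := fun i => if h : (U i).Nonempty then h.some 0 else 0 with hq_def
  set J : ℕ → Set ℝ := fun i => Icc (q i - (d i).toReal) (q i + (d i).toReal) with hJ_def
  -- slice estimate
  have key : ∀ t ∈ Icc a (a + m), ENNReal.ofReal (c * (r / 4) ^ (1 - ε)) ≤
      ∑' i, (J i).indicator (fun _ => d i ^ (1 - ε)) t := by
    intro t ht
    have hlow := hK (x 1) hx1 (r / 4) (by positivity) (by linarith)
    refine le_trans hlow ?_
    set V : ℕ → Set ℝ := fun i => (fun y => LRemb t y) ⁻¹' (U i) with hV_def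
    have hcover : K ∩ ball (x 1) (r / 4) ⊆ ⋃ i, V i := by
      intro y hy
      have hmem : LRemb t y ∈ A ∩ ball x r := by
        constructor
        · rw [hA]
          exact ⟨haI ht, hy.1, rfl⟩
        · rw [mem_ball]
          have h1 : dist t (x 0) ≤ r / 4 := by rw [Real.dist_eq]; exact hadist t ht
          have h2 : dist y (x 1) < r / 4 := mem_ball.mp hy.2
          have hsq : dist (LRemb t y) x ^ 2 < r ^ 2 := by
            rw [LRemb_dist_sq t y x hx2]
            nlinarith [dist_nonneg (x := t) (y := x 0), dist_nonneg (x := y) (y := x 1)]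
          exact lt_of_pow_lt_pow_left₀ 2 hr.le hsq
      obtain ⟨i, hi⟩ := mem_iUnion.mp (hU hmem)
      exact mem_iUnion.mpr ⟨i, hi⟩
    refine le_trans (hContent_le_of_cover _ _ V hcover) ?_
    refine ENNReal.tsum_le_tsum (fun i => ?_)
    rcases eq_empty_or_nonempty (V i) with hVe | ⟨y, hy⟩
    · rw [hVe]
      simp [EMetric.diam, Metric.ediam_empty, ENNReal.zero_rpow_of_pos (show (0:ℝ) < 1 - ε by linarith)]
    · have hyU : LRemb t y ∈ U i := hy
      have hUne : (U i).Nonempty := ⟨LRemb t y, hyU⟩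
      have hqi : q i = hUne.some 0 := by rw [hq_def]; simp only [dif_pos hUne]
      have hsome : hUne.some ∈ U i := hUne.some_mem
      have htJ : t ∈ J i := by
        have hdd : dist t (q i) ≤ (d i).toReal := by
          calc dist t (q i) = dist ((LRemb t y) 0) (hUne.some 0) := by
                rw [LRemb_apply0, hqi]
            _ ≤ dist (LRemb t y) hUne.some := LR_coord_lip _ _ 0
            _ = (edist (LRemb t y) hUne.some).toReal := by rw [dist_edist]
            _ ≤ (d i).toReal :=
                ENNReal.toReal_mono (hfin i) (EMetric.edist_le_diam_of_mem hyU hsome)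
        rw [hJ_def]
        have := abs_le.mp (by rwa [Real.dist_eq] at hdd)
        exact ⟨by linarith [this.1], by linarith [this.2]⟩
      rw [Set.indicator_of_mem htJ]
      refine ENNReal.rpow_le_rpow ?_ (by linarith)
      apply EMetric.diam_le
      intro z hz w hw
      calc edist z w = edist (LRemb t z) (LRemb t w) := (LRemb_edist t z w).symm
        _ ≤ d i := EMetric.edist_le_diam_of_mem hz hw
  -- integrate over the interval
  have hmeas : ∀ i, Measurable ((J i).indicator (fun _ : ℝ => d i ^ (1 - ε))) :=
    fun i => measurable_const.indicator measurableSet_Icc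
  have step1 : ENNReal.ofReal (c * (r / 4) ^ (1 - ε)) * ENNReal.ofReal m ≤
      ∫⁻ t in Icc a (a + m), ∑' i, (J i).indicator (fun _ => d i ^ (1 - ε)) t := by
    have hvol : volume (Icc a (a + m)) = ENNReal.ofReal m := by
      rw [Real.volume_Icc]; ring_nf
    calc ENNReal.ofReal (c * (r / 4) ^ (1 - ε)) * ENNReal.ofReal m
        = ∫⁻ _ in Icc a (a + m), ENNReal.ofReal (c * (r / 4) ^ (1 - ε)) := by
          rw [setLIntegral_const, hvol]
      _ ≤ _ := setLIntegral_mono (Measurable.ennreal_tsum hmeas) key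
  have step2 : ∫⁻ t in Icc a (a + m), ∑' i, (J i).indicator (fun _ => d i ^ (1 - ε)) t =
      ∑' i, d i ^ (1 - ε) * volume (J i ∩ Icc a (a + m)) := by
    rw [lintegral_tsum (fun i => (hmeas i).aemeasurable)]
    congr 1
    ext i
    rw [lintegral_indicator_const measurableSet_Icc,
      Measure.restrict_apply measurableSet_Icc]
  have step3 : ∀ i, d i ^ (1 - ε) * volume (J i ∩ Icc a (a + m)) ≤ 2 * d i ^ (2 - ε) := by
    intro i
    rcases eq_or_ne (d i) 0 with h0 | h0
    · have : volume (J i ∩ Icc a (a + m)) ≤ volume (J i) :=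
        measure_mono inter_subset_left
      have hJ0 : volume (J i) = 0 := by
        rw [hJ_def]
        simp only [h0, ENNReal.toReal_zero]
        rw [Real.volume_Icc]
        simp
      rw [h0]
      rw [ENNReal.zero_rpow_of_pos (by linarith : (0:ℝ) < 1 - ε)]
      simp
    · have hvJ : volume (J i ∩ Icc a (a + m)) ≤ 2 * d i := by
        calc volume (J i ∩ Icc a (a + m)) ≤ volume (J i) := measure_mono inter_subset_left
          _ = ENNReal.ofReal (q i + (d i).toReal - (q i - (d i).toReal)) := by
              rw [hJ_def, Real.volume_Icc]
          _ = ENNReal.ofReal (2 * (d i).toReal) := by ring_nf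
          _ = 2 * ENNReal.ofReal ((d i).toReal) := by
              rw [ENNReal.ofReal_mul (by norm_num)]; norm_num
          _ = 2 * d i := by rw [ENNReal.ofReal_toReal (hfin i)]
      calc d i ^ (1 - ε) * volume (J i ∩ Icc a (a + m)) ≤ d i ^ (1 - ε) * (2 * d i) :=
            mul_le_mul_right hvJ _
        _ = 2 * (d i ^ (1 - ε) * d i) := by ring
        _ = 2 * d i ^ (2 - ε) := by
            congr 1
            calc d i ^ (1 - ε) * d i = d i ^ (1 - ε) * d i ^ (1:ℝ) := by
                  rw [ENNReal.rpow_one]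
              _ = d i ^ ((1 - ε) + 1) := (ENNReal.rpow_add _ _ h0 (hfin i)).symm
              _ = d i ^ (2 - ε) := by ring_nf
  have main : ENNReal.ofReal (c * (r / 4) ^ (1 - ε)) * ENNReal.ofReal m ≤
      2 * ∑' i, d i ^ (2 - ε) := by
    calc ENNReal.ofReal (c * (r / 4) ^ (1 - ε)) * ENNReal.ofReal m
        ≤ ∑' i, d i ^ (1 - ε) * volume (J i ∩ Icc a (a + m)) := step2 ▸ step1
      _ ≤ ∑' i, 2 * d i ^ (2 - ε) := ENNReal.tsum_le_tsum step3
      _ = 2 * ∑' i, d i ^ (2 - ε) := ENNReal.tsum_mul_left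
  -- conclude with real arithmetic
  have hreal : 2 * (c / 64 * r ^ (2 - ε)) ≤ c * (r / 4) ^ (1 - ε) * m := by
    have h14 : (1 / 4 : ℝ) ≤ (1 / 4 : ℝ) ^ (1 - ε) := by
      have := Real.rpow_le_rpow_of_exponent_ge (by norm_num : (0:ℝ) < 1 / 4)
        (by norm_num : (1 / 4 : ℝ) ≤ 1) (by linarith : 1 - ε ≤ 1)
      rwa [Real.rpow_one] at this
    have hsplit : (r / 4 : ℝ) ^ (1 - ε) = r ^ (1 - ε) * (1 / 4 : ℝ) ^ (1 - ε) := by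
      rw [show (r / 4 : ℝ) = r * (1 / 4) by ring,
        Real.mul_rpow hr.le (by norm_num)]
    have hradd : r ^ (2 - ε) = r ^ (1 - ε) * r := by
      calc r ^ (2 - ε) = r ^ ((1 - ε) + 1) := by ring_nf
        _ = r ^ (1 - ε) * r ^ (1:ℝ) := Real.rpow_add hr _ _
        _ = r ^ (1 - ε) * r := by rw [Real.rpow_one]
    have hrpos : 0 < r ^ (1 - ε) := Real.rpow_pos_of_pos hr _
    rw [hradd, hsplit]
    have h1 : c * (r ^ (1 - ε) * (1 / 4 : ℝ) ^ (1 - ε)) * m ≥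
        c * (r ^ (1 - ε) * (1 / 4)) * (r / 8) := by
      apply mul_le_mul
      · apply mul_le_mul_of_nonneg_left _ hc.le
        exact mul_le_mul_of_nonneg_left h14 hrpos.le
      · exact hm8
      · positivity
      · positivity
    nlinarith [hrpos]
  calc ENNReal.ofReal (c / 64 * r ^ (2 - ε))
      ≤ ∑' i, d i ^ (2 - ε) := by
        refine (ENNReal.mul_le_mul_iff_right (two_ne_zero) ENNReal.ofNat_ne_top).mp ?_
        calc (2:ℝ≥0∞) * ENNReal.ofReal (c / 64 * r ^ (2 - ε))
            = ENNReal.ofReal (2 * (c / 64 * r ^ (2 - ε))) := by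
              rw [show (2:ℝ≥0∞) = ENNReal.ofReal 2 by norm_num,
                ← ENNReal.ofReal_mul (by norm_num : (0:ℝ) ≤ 2)]
          _ ≤ ENNReal.ofReal (c * (r / 4) ^ (1 - ε) * m) :=
              ENNReal.ofReal_le_ofReal hreal
          _ = ENNReal.ofReal (c * (r / 4) ^ (1 - ε)) * ENNReal.ofReal m := by
              rw [ENNReal.ofReal_mul (by positivity)]
          _ ≤ 2 * ∑' i, d i ^ (2 - ε) := main
end
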